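/- Consider the Hopfield neural network vector field f_H(x) = −Cx + AΦ(x) + u on ℝ^n, where C is positive semidefinite diagonal, A ∈ ℝ^{n×n}, u ∈ ℝ^n, and Φ(x) = (φ_1(x_1),…,φ_n(x_n)) is continuously differentiable with φ_i'(s) ∈ [d_1, d_2] for all s. Then for any η ∈ ℝ^n_{>0}, sup_x μ_{1,[η]}(Df_H(x)) ≤ max{ μ_{1,[η]}(−C + d_1 A), μ_{1,[η]}(−C + d_2 A) }. -/

import Mathlib

open Finset Matrix

/-- Weighted ℓ¹ logarithmic norm (explicit formula). -/
noncomputable def mu1 {n : ℕ} (η : Fin n → ℝ) (A : Matrix (Fin n) (Fin n) ℝ) : ℝ :=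
  ⨆ i, (A i i + ∑ j ∈ univ.erase i, (η j / η i) * |A j i|)

/-- Convexity bound: for `0 ≤ S`, `d ↦ c + a*d + S*|d|` attains its max on
`[d₁,d₂]` at the endpoints. -/
lemma aux_convex_bound (c a S d₁ d₂ d : ℝ) (hS : 0 ≤ S) (h1 : d₁ ≤ d) (h2 : d ≤ d₂) :
    c + a * d + S * |d| ≤ max (c + a * d₁ + S * |d₁|) (c + a * d₂ + S * |d₂|) := by
  have hlin : ConvexOn ℝ (Set.univ : Set ℝ) (fun t : ℝ => a * t) := by
    have := (LinearMap.lsmul ℝ ℝ a).convexOn (convex_univ : Convex ℝ (Set.univ : Set ℝ))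
    exact ⟨convex_univ, fun x _ y _ p q _ _ _ => le_of_eq (by simp only [smul_eq_mul]; ring)⟩
  have habs : ConvexOn ℝ (Set.univ : Set ℝ) (fun t : ℝ => S * |t|) := by
    have := (convexOn_univ_norm (E := ℝ)).smul hS
    simpa [Real.norm_eq_abs, smul_eq_mul] using this
  have hf : ConvexOn ℝ (Set.univ : Set ℝ) (fun t : ℝ => c + a * t + S * |t|) := by
    have := ((convexOn_const (c := c) (convex_univ : Convex ℝ (Set.univ : Set ℝ))).add hlin).add habs
    simpa [Pi.add_def] using this
  have hmem : d ∈ segment ℝ d₁ d₂ := by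
    rw [segment_eq_Icc (le_trans h1 h2)]
    exact ⟨h1, h2⟩
  exact hf.le_on_segment (Set.mem_univ d₁) (Set.mem_univ d₂) hmem

/-- For the Hopfield vector field `f_H(x) = −Cx + AΦ(x) + u` with `C` PSD
diagonal and smooth slope-restricted activations, the weighted ℓ¹ log norm of
the Jacobian is bounded by `max{μ_{1,[η]}(−C+d₁A), μ_{1,[η]}(−C+d₂A)}`
uniformly in `x`. -/
theorem hopfield_jacobian_mu1_bound {n : ℕ}
    (cvec : Fin n → ℝ) (hc : ∀ i, 0 ≤ cvec i)
    (A : Matrix (Fin n) (Fin n) ℝ) (u : Fin n → ℝ)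
    (d₁ d₂ : ℝ) (hd : d₁ ≤ d₂)
    (φ : Fin n → ℝ → ℝ) (hφ : ∀ i, Differentiable ℝ (φ i))
    (hslope : ∀ i s, deriv (φ i) s ∈ Set.Icc d₁ d₂)
    (η : Fin n → ℝ) (hη : ∀ i, 0 < η i) :
    ∀ (x : Fin n → ℝ) (J : Matrix (Fin n) (Fin n) ℝ),
      HasFDerivAt
        (fun z : Fin n → ℝ =>
          -(Matrix.diagonal cvec).mulVec z + A.mulVec (fun i => φ i (z i)) + u)
        (LinearMap.toContinuousLinearMap J.mulVecLin) x →
      mu1 η J ≤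
        max (mu1 η (-(Matrix.diagonal cvec) + d₁ • A))
            (mu1 η (-(Matrix.diagonal cvec) + d₂ • A)) := by
  intro x J hJ
  set D : Fin n → ℝ := fun i => deriv (φ i) (x i) with hDdef
  have hDmem : ∀ i, D i ∈ Set.Icc d₁ d₂ := fun i => hslope i (x i)
  -- derivative of Φ
  have hΦ : HasFDerivAt (fun z : Fin n → ℝ => (fun i => φ i (z i)))
      (LinearMap.toContinuousLinearMap (Matrix.diagonal D).mulVecLin) x := by
    apply hasFDerivAt_pi''
    intro i
    have h1 : HasDerivAt (φ i) (D i) (x i) := ((hφ i) (x i)).hasDerivAt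
    have h2 : HasFDerivAt (fun z : Fin n → ℝ => z i)
        (ContinuousLinearMap.proj (R := ℝ) (φ := fun _ : Fin n => ℝ) i) x :=
      hasFDerivAt_apply (F' := fun _ : Fin n => ℝ) i x
    have h3 := h1.comp_hasFDerivAt x h2
    convert h3 using 1
    ext v
    simp [Matrix.mulVec_diagonal, mul_comm]
    · rfl
    · ext v
      simp [Matrix.mulVec_diagonal, mul_comm]
  have hmap : HasFDerivAt
      (fun z : Fin n → ℝ =>
        -(Matrix.diagonal cvec).mulVec z + A.mulVec (fun i => φ i (z i)) + u)
      ((LinearMap.toContinuousLinearMap (-(Matrix.diagonal cvec)).mulVecLin)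
        + (LinearMap.toContinuousLinearMap A.mulVecLin).comp
            (LinearMap.toContinuousLinearMap (Matrix.diagonal D).mulVecLin)) x := by
    apply HasFDerivAt.add_const
    apply HasFDerivAt.add
    · have h0 : HasFDerivAt (fun z : Fin n → ℝ => (Matrix.diagonal cvec).mulVec z)
          (LinearMap.toContinuousLinearMap (Matrix.diagonal cvec).mulVecLin) x :=
        (LinearMap.toContinuousLinearMap (Matrix.diagonal cvec).mulVecLin).hasFDerivAt
      have h1 := h0.neg
      convert h1 using 1
      ext v
      simp [Matrix.mulVec_diagonal, neg_mul]
      ext v k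
      simp [Matrix.mulVec_diagonal]
    · exact ((LinearMap.toContinuousLinearMap A.mulVecLin).hasFDerivAt).comp x hΦ
  have hEq := hJ.unique hmap
  have hentry : ∀ i j, J j i = (-(Matrix.diagonal cvec)) j i + A j i * D i := by
    intro i j
    have h := congrFun (congrArg (fun L : (Fin n → ℝ) →L[ℝ] (Fin n → ℝ) => (L : (Fin n → ℝ) → (Fin n → ℝ))) hEq) (Pi.single i 1)
    have h2 := congrFun h j
    simp only [ContinuousLinearMap.coe_add', Pi.add_apply,
      ContinuousLinearMap.coe_comp', Function.comp_apply,
      LinearMap.coe_toContinuousLinearMap', Matrix.mulVecLin_apply,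
      Matrix.mulVec_single_one, Matrix.diagonal_mulVec_single, mul_one, Matrix.col, Matrix.transpose_apply] at h2
    rw [show (Matrix.diagonal D)ᵀ i = Pi.single i (D i) from
      funext fun k => by by_cases h : k = i <;>
        simp [Matrix.diagonal_apply, Pi.single_apply, h]] at h2
    simpa [Matrix.mulVec_single, Matrix.col] using h2
  -- now the sup bound
  rcases isEmpty_or_nonempty (Fin n) with he | hne
  · simp [mu1, Real.iSup_of_isEmpty]
  · apply ciSup_le
    intro i
    set S : ℝ := ∑ j ∈ univ.erase i, (η j / η i) * |A j i| with hSdef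
    have hS : 0 ≤ S := by
      apply Finset.sum_nonneg
      intro j _
      exact mul_nonneg (div_nonneg (hη j).le (hη i).le) (abs_nonneg _)
    have hcol : J i i + ∑ j ∈ univ.erase i, (η j / η i) * |J j i|
        = -cvec i + A i i * D i + S * |D i| := by
      have hdiag : J i i = -cvec i + A i i * D i := by
        have := hentry i i
        simpa [Matrix.diagonal_apply_eq] using this
      have hoff : ∀ j ∈ univ.erase i, (η j / η i) * |J j i|
          = ((η j / η i) * |A j i|) * |D i| := by
        intro j hj
        have hji : j ≠ i := Finset.ne_of_mem_erase hj
        have : J j i = A j i * D i := by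
          have h := hentry i j
          simpa [Matrix.diagonal_apply_ne _ hji] using h
        rw [this, abs_mul]
        ring
      rw [hdiag, Finset.sum_congr rfl hoff, ← Finset.sum_mul]
    rw [hcol]
    have key := aux_convex_bound (-cvec i) (A i i) S d₁ d₂ (D i) hS (hDmem i).1 (hDmem i).2
    have hcolM : ∀ d : ℝ, -cvec i + A i i * d + S * |d|
        ≤ mu1 η (-(Matrix.diagonal cvec) + d • A) := by
      intro d
      have h := le_ciSup (f := fun k =>
        ((-(Matrix.diagonal cvec) + d • A) k k
          + ∑ j ∈ univ.erase k, (η j / η k) * |(-(Matrix.diagonal cvec) + d • A) j k|))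
        (Set.Finite.bddAbove (Set.finite_range _)) i
      refine le_trans (le_of_eq ?_) h
      have hdiag : (-(Matrix.diagonal cvec) + d • A) i i = -cvec i + d * A i i := by
        simp [Matrix.diagonal_apply_eq]
      have hoff : ∀ j ∈ univ.erase i,
          (η j / η i) * |(-(Matrix.diagonal cvec) + d • A) j i|
            = ((η j / η i) * |A j i|) * |d| := by
        intro j hj
        have hji : j ≠ i := Finset.ne_of_mem_erase hj
        simp only [Matrix.add_apply, Matrix.neg_apply, Matrix.smul_apply, smul_eq_mul,
          Matrix.diagonal_apply_ne _ hji, neg_zero, zero_add, abs_mul]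
        ring
      rw [hdiag, Finset.sum_congr rfl hoff, ← Finset.sum_mul]
      ring
    exact key.trans (max_le_max (hcolM d₁) (hcolM d₂))
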